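/- Critical point identity: let N ≥ 1, let α₁,...,α_N > 0 and let δ₁,...,δ_N be defined by exp(-Σ_{j≥i} δ_j) = exp(-Σ_{j≥i} α_j) + (1 - exp(-Σ_{j≥i} α_j))·η for all i = 1,...,N, where 0 < η < 1 is a fixed constant. Then for each i, (1 - exp(-δ_i)) / (exp(-δ_i) - exp(-α_i)) = ((1-η)/η) · exp(-Σ_{j>i} α_j). In particular, the left-hand side multiplied by exp(Σ_{j>i} α_j) is independent of i. -/
import Mathlib


/-- Critical point identity: if `exp(-Σ_{j≥i} δⱼ) = exp(-Σ_{j≥i} αⱼ) + (1 - exp(-Σ_{j≥i} αⱼ))·η`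
for all `i`, with `0 < η < 1` and all `αᵢ > 0`, then
`(1 - e^{-δᵢ}) / (e^{-δᵢ} - e^{-αᵢ}) = ((1-η)/η) e^{-Σ_{j>i} αⱼ}` for each `i`;
in particular the left-hand side multiplied by `e^{Σ_{j>i} αⱼ}` is independent of `i`. -/
theorem critical_point_identity (N : ℕ) (hN : 1 ≤ N) (α δ : Fin N → ℝ) (η : ℝ)
    (hα : ∀ i, 0 < α i) (hη0 : 0 < η) (hη1 : η < 1)
    (hrel : ∀ i : Fin N,
      Real.exp (-(∑ j ∈ Finset.univ.filter (fun j => i ≤ j), δ j))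
        = Real.exp (-(∑ j ∈ Finset.univ.filter (fun j => i ≤ j), α j))
          + (1 - Real.exp (-(∑ j ∈ Finset.univ.filter (fun j => i ≤ j), α j))) * η) :
    ∀ i : Fin N,
      (1 - Real.exp (-δ i)) / (Real.exp (-δ i) - Real.exp (-α i))
        = (1 - η) / η *
            Real.exp (-(∑ j ∈ Finset.univ.filter (fun j => i < j), α j)) := by
  intro i
  classical
  set A : ℝ := ∑ j ∈ Finset.univ.filter (fun j => i < j), α j with hA
  set D : ℝ := ∑ j ∈ Finset.univ.filter (fun j => i < j), δ j with hD
  have hnotmem : i ∉ Finset.univ.filter (fun j => i < j) := by simp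
  have hsplit : Finset.univ.filter (fun j => i ≤ j)
      = insert i (Finset.univ.filter (fun j => i < j)) := by
    ext j
    simp only [Finset.mem_filter, Finset.mem_univ, true_and, Finset.mem_insert]
    constructor
    · intro hle
      rcases eq_or_lt_of_le hle with h | h
      · exact Or.inl h.symm
      · exact Or.inr h
    · rintro (rfl | h)
      · exact le_refl _
      · exact le_of_lt h
  have hsumα : ∑ j ∈ Finset.univ.filter (fun j => i ≤ j), α j = α i + A := by
    rw [hsplit, Finset.sum_insert hnotmem]
  have hsumδ : ∑ j ∈ Finset.univ.filter (fun j => i ≤ j), δ j = δ i + D := by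
    rw [hsplit, Finset.sum_insert hnotmem]
  -- strict version of the relation
  have hstrict : Real.exp (-D) = η + (1 - η) * Real.exp (-A) := by
    by_cases h : i.1 + 1 < N
    · have heq : Finset.univ.filter (fun j => i < j)
          = Finset.univ.filter (fun j => (⟨i.1 + 1, h⟩ : Fin N) ≤ j) := by
        ext j
        simp only [Finset.mem_filter, Finset.mem_univ, true_and, Fin.lt_def, Fin.le_def]
        omega
      have H := hrel ⟨i.1 + 1, h⟩
      rw [← heq] at H
      rw [hD, hA, H]; ring
    · have hempty : Finset.univ.filter (fun j => i < j) = (∅ : Finset (Fin N)) := by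
        ext j
        simp only [Finset.mem_filter, Finset.mem_univ, true_and,
          Finset.notMem_empty, iff_false]
        intro hj
        rw [Fin.lt_def] at hj
        have := j.2
        omega
      have hA0 : A = 0 := by rw [hA, hempty]; simp
      have hD0 : D = 0 := by rw [hD, hempty]; simp
      rw [hA0, hD0]
      simp
  have H := hrel i
  rw [hsumα, hsumδ] at H
  set ed := Real.exp (-δ i) with hed
  set eu := Real.exp (-α i) with heu
  set ev := Real.exp (-A) with hev
  have hexp1 : Real.exp (-(δ i + D)) = ed * Real.exp (-D) := by
    rw [neg_add, Real.exp_add]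
  have hexp2 : Real.exp (-(α i + A)) = eu * ev := by
    rw [neg_add, Real.exp_add]
  rw [hexp1, hexp2, hstrict] at H
  -- H : ed * (η + (1 - η) * ev) = eu * ev + (1 - eu * ev) * η
  have hev0 : 0 < ev := Real.exp_pos _
  have heu1 : eu < 1 := by
    rw [heu]
    exact Real.exp_lt_one_iff.mpr (neg_lt_zero.mpr (hα i))
  have hDen : 0 < η + (1 - η) * ev := by nlinarith
  have key : (ed - eu) * (η + (1 - η) * ev) = η * (1 - eu) := by linear_combination H
  have hpos : 0 < ed - eu := by nlinarith
  have key2 : (1 - ed) * (η + (1 - η) * ev) = (1 - η) * ev * (1 - eu) := by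
    linear_combination -H
  have final : (1 - ed) * η = (1 - η) * ev * (ed - eu) :=
    mul_right_cancel₀ hDen.ne' (by linear_combination η * key2 - (1 - η) * ev * key)
  rw [div_eq_iff hpos.ne']
  have hη : η ≠ 0 := hη0.ne'
  field_simp
  linear_combination final
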